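/- Let n ≥ 2, m ≥ 1, d ≥ 1, and let A ∈ GL_m(ℤ/nℤ) have order d and satisfy Φ_d(A) = 0 in Mat_m(ℤ/nℤ). For 0 ≤ k ≤ d−1, write x^k ≡ ∑_{j=0}^{φ(d)−1} c_{jk} x^j (mod Φ_d(x)) with c_{jk} ∈ ℤ. Then for every v ∈ (ℤ/nℤ)^m, the supercharacter value θ(v) = ∑_{k=0}^{d−1} exp(2πi (A^k 𝟏 · v)/n) equals ∑_{k=0}^{d−1} ∏_{j=0}^{φ(d)−1} exp(2πi (A^j 𝟏 · v)/n)^{c_{jk}}. In particular θ(v) lies in the image of the Laurent polynomial g_d : 𝕋^{φ(d)} → ℂ, g_d(z_1,…,z_{φ(d)}) = ∑_{k=0}^{d−1} ∏_{j=0}^{φ(d)−1} z_{j+1}^{c_{jk}}. -/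

import Mathlib

open Finset Matrix Polynomial

private lemma DGL_prod_zpow_sum {ζ : ℂ} (hζ : ζ ≠ 0) (s : Finset ℕ) (f : ℕ → ℤ) :
    ∏ j ∈ s, ζ ^ (f j) = ζ ^ (∑ j ∈ s, f j) := by
  induction s using Finset.cons_induction with
  | empty => simp
  | cons a s ha ih => rw [Finset.prod_cons, Finset.sum_cons, ih, ← zpow_add₀ hζ]

private lemma DGL_zpow_congr {n : ℕ} (hn : n ≠ 0) {ζ : ℂ} (hζ : ζ ^ n = 1) {a b : ℤ}
    (h : ((a : ZMod n) : ZMod n) = (b : ZMod n)) : ζ ^ a = ζ ^ b := by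
  have hζ0 : ζ ≠ 0 := by
    intro h0
    rw [h0, zero_pow hn] at hζ
    exact one_ne_zero hζ.symm
  have hdvd : (n : ℤ) ∣ b - a := Int.ModEq.dvd ((ZMod.intCast_eq_intCast_iff _ _ _).1 h)
  obtain ⟨t, ht⟩ := hdvd
  have hb : b = a + n * t := by omega
  rw [hb, zpow_add₀ hζ0, _root_.zpow_mul, zpow_natCast, hζ, _root_.one_zpow, mul_one]

private lemma DGL_sum_mulVec {R : Type*} [CommRing R] {m : Type*} [Fintype m]
    (s : Finset ℕ) (f : ℕ → Matrix m m R) (u v : m → R) :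
    ((∑ j ∈ s, f j) *ᵥ u) ⬝ᵥ v = ∑ j ∈ s, ((f j *ᵥ u) ⬝ᵥ v) := by
  induction s using Finset.cons_induction with
  | empty => simp
  | cons a s ha ih => rw [Finset.sum_cons, Finset.sum_cons, Matrix.add_mulVec, add_dotProduct, ih]

/-- Generalized Duke–Garcia–Lutz containment: if `A ∈ GL_m(ℤ/nℤ)` has order `d` and
`Φ_d(A) = 0`, then each supercharacter value `θ(v) = ∑_{k<d} exp(2πi (A^k 𝟏 · v)/n)`
equals `∑_{k<d} ∏_{j<φ(d)} exp(2πi (A^j 𝟏 · v)/n)^{c_{jk}}`, where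
`x^k ≡ ∑_j c_{jk} x^j (mod Φ_d)`; in particular `θ(v)` lies in the image of the
Laurent polynomial `g_d` on the `φ(d)`-torus. -/
theorem generalized_DGL_containment (n m d : ℕ) (hn : 2 ≤ n) (hm : 1 ≤ m) (hd : 1 ≤ d)
    (A : GL (Fin m) (ZMod n)) (hA : orderOf A = d)
    (hΦ : aeval (A : Matrix (Fin m) (Fin m) (ZMod n)) (cyclotomic d ℤ) = 0)
    (c : ℕ → ℕ → ℤ)
    (hc : ∀ k < d, (X ^ k : Polynomial ℤ) %ₘ cyclotomic d ℤ =
      ∑ j ∈ Finset.range (Nat.totient d), C (c j k) * X ^ j)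
    (v : Fin m → ZMod n) :
    (∑ k ∈ Finset.range d,
        Complex.exp (2 * Real.pi * Complex.I *
          ((((((A : Matrix (Fin m) (Fin m) (ZMod n)) ^ k) *ᵥ fun _ => 1) ⬝ᵥ v).val : ℂ)) / n) =
      ∑ k ∈ Finset.range d, ∏ j ∈ Finset.range (Nat.totient d),
        (Complex.exp (2 * Real.pi * Complex.I *
          ((((((A : Matrix (Fin m) (Fin m) (ZMod n)) ^ j) *ᵥ fun _ => 1) ⬝ᵥ v).val : ℂ)) / n)) ^ (c j k)) ∧
    ∃ z : Fin (Nat.totient d) → ℂ, (∀ j, ‖z j‖ = 1) ∧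
      (∑ k ∈ Finset.range d,
          Complex.exp (2 * Real.pi * Complex.I *
            ((((((A : Matrix (Fin m) (Fin m) (ZMod n)) ^ k) *ᵥ fun _ => 1) ⬝ᵥ v).val : ℂ)) / n) =
        ∑ k ∈ Finset.range d, ∏ j : Fin (Nat.totient d), (z j) ^ (c (j : ℕ) k)) := by
  have hn0 : n ≠ 0 := by omega
  haveI : NeZero n := ⟨hn0⟩
  set M : Matrix (Fin m) (Fin m) (ZMod n) := (A : Matrix (Fin m) (Fin m) (ZMod n)) with hM
  set w : ℕ → ZMod n := fun k => (M ^ k *ᵥ fun _ => 1) ⬝ᵥ v with hwdef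
  set ζ : ℂ := Complex.exp (2 * Real.pi * Complex.I / n) with hζdef
  set F : ℕ → ℂ := fun k =>
    Complex.exp (2 * Real.pi * Complex.I * (((w k).val : ℂ)) / n) with hFdef
  have hζn : ζ ^ n = 1 := by
    rw [hζdef, ← Complex.exp_nat_mul]
    have hnC : (n : ℂ) ≠ 0 := Nat.cast_ne_zero.2 hn0
    have : (n : ℂ) * (2 * Real.pi * Complex.I / n) = 2 * Real.pi * Complex.I := by
      field_simp
    rw [this, Complex.exp_two_pi_mul_I]
  have hζ0 : ζ ≠ 0 := Complex.exp_ne_zero _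
  have hF : ∀ k, F k = ζ ^ (((w k).val : ℤ)) := by
    intro k
    rw [hFdef, hζdef]
    simp only [zpow_natCast]
    rw [← Complex.exp_nat_mul]
    congr 1
    push_cast
    ring
  -- matrix identity for k < d
  have hMk : ∀ k < d, M ^ k =
      ∑ j ∈ Finset.range (Nat.totient d), (c j k : Matrix (Fin m) (Fin m) (ZMod n)) * M ^ j := by
    intro k hk
    have h0 := Polynomial.modByMonic_add_div (X ^ k : Polynomial ℤ) (cyclotomic d ℤ)
    have h1 := congrArg (aeval M) h0
    simp only [map_add, _root_.map_mul, hΦ, zero_mul, add_zero, aeval_X_pow] at h1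
    rw [hc k hk] at h1
    simp only [map_sum, _root_.map_mul, aeval_C, aeval_X_pow, algebraMap_int_eq, eq_intCast, map_intCast] at h1
    exact h1.symm
  have hw : ∀ k < d, w k = ∑ j ∈ Finset.range (Nat.totient d), (c j k : ZMod n) * w j := by
    intro k hk
    have : w k = ((∑ j ∈ Finset.range (Nat.totient d),
        (c j k : Matrix (Fin m) (Fin m) (ZMod n)) * M ^ j) *ᵥ fun _ => 1) ⬝ᵥ v := by
      rw [hwdef]; rw [← hMk k hk]
    rw [this, DGL_sum_mulVec]
    refine Finset.sum_congr rfl fun j _ => ?_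
    have : (c j k : Matrix (Fin m) (Fin m) (ZMod n)) * M ^ j = (c j k) • M ^ j := by
      rw [zsmul_eq_mul]
    rw [this, Matrix.smul_mulVec, smul_dotProduct, zsmul_eq_mul]
  -- key pointwise identity
  have key : ∀ k < d, F k = ∏ j ∈ Finset.range (Nat.totient d), (F j) ^ (c j k) := by
    intro k hk
    have hprod : ∏ j ∈ Finset.range (Nat.totient d), (F j) ^ (c j k) =
        ζ ^ (∑ j ∈ Finset.range (Nat.totient d), (c j k) * ((w j).val : ℤ)) := by
      rw [← DGL_prod_zpow_sum hζ0]
      refine Finset.prod_congr rfl fun j _ => ?_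
      rw [hF j, ← _root_.zpow_mul]
      congr 1
      ring
    rw [hprod, hF k]
    apply DGL_zpow_congr hn0 hζn
    push_cast
    simp only [ZMod.natCast_val, ZMod.cast_id]
    exact hw k hk
  have main : (∑ k ∈ Finset.range d,
        Complex.exp (2 * Real.pi * Complex.I * (((w k).val : ℂ)) / n)) =
      ∑ k ∈ Finset.range d, ∏ j ∈ Finset.range (Nat.totient d),
        (Complex.exp (2 * Real.pi * Complex.I * (((w j).val : ℂ)) / n)) ^ (c j k) :=
    Finset.sum_congr rfl fun k hk => key k (Finset.mem_range.1 hk)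
  have hζnorm : ‖ζ‖ = 1 := by
    rw [hζdef]
    have : 2 * Real.pi * Complex.I / n = ((2 * Real.pi / n : ℝ) : ℂ) * Complex.I := by
      push_cast; ring
    rw [this]
    exact Complex.norm_exp_ofReal_mul_I _
  have hFnorm : ∀ k, ‖F k‖ = 1 := fun k => by
    rw [hF k, norm_zpow, hζnorm, _root_.one_zpow]
  refine ⟨main, ⟨fun j => F (j : ℕ), fun j => hFnorm _, ?_⟩⟩
  · rw [main]
    refine Finset.sum_congr rfl fun k _ => ?_
    rw [← Fin.prod_univ_eq_prod_range (fun j => F j ^ (c j k)) (Nat.totient d)]
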